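/- If X ⊆ ℝ^n is non-empty, compact and convex, then X contains exactly one lexicographic maximum. -/

import Mathlib

noncomputable def sortedComp {n : ℕ} (x : Fin n → ℝ) (k : Fin n) : ℝ :=
  x (Tuple.sort x k)

def IsLexMax {n : ℕ} (X : Set (Fin n → ℝ)) (y : Fin n → ℝ) : Prop :=
  y ∈ X ∧ ∀ x ∈ X, x = y ∨ ∃ i : Fin n,
    (∀ j : Fin n, j < i → sortedComp y j = sortedComp x j) ∧
    sortedComp x i < sortedComp y i

namespace LexAux
variable {n : ℕ}

lemma sortedComp_monotone (z : Fin n → ℝ) : Monotone (sortedComp z) :=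
  Tuple.monotone_sort z

noncomputable def psum (k : ℕ) (z : Fin n → ℝ) : ℝ :=
  ∑ i ∈ Finset.univ.filter (fun i : Fin n => (i : ℕ) < k), sortedComp z i

lemma psum_zero (z : Fin n → ℝ) : psum 0 z = 0 := by simp [psum]

lemma strictMono_le {k : ℕ} (f : Fin k → Fin n) (hf : StrictMono f) (i : Fin k) :
    (i : ℕ) ≤ (f i : ℕ) := by
  have h : (Finset.Iio i).image f ⊆ Finset.Iio (f i) := by
    intro j hj
    simp only [Finset.mem_image, Finset.mem_Iio] at *
    obtain ⟨a, ha, rfl⟩ := hj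
    exact hf ha
  have hc := Finset.card_le_card h
  rwa [Finset.card_image_of_injective _ hf.injective, Fin.card_Iio, Fin.card_Iio] at hc

lemma filter_lt_eq_image {k : ℕ} (hk : k ≤ n) :
    Finset.univ.filter (fun i : Fin n => (i : ℕ) < k) =
      Finset.univ.image (Fin.castLE hk) := by
  ext j
  simp only [Finset.mem_filter, Finset.mem_univ, true_and, Finset.mem_image]
  constructor
  · intro hj; exact ⟨⟨j, hj⟩, rfl⟩
  · rintro ⟨i, rfl⟩; exact i.2

lemma sum_mono_le {g : Fin n → ℝ} (hg : Monotone g) {k : ℕ} (B : Finset (Fin n))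
    (hB : B.card = k) :
    ∑ i ∈ Finset.univ.filter (fun i : Fin n => (i : ℕ) < k), g i ≤ ∑ i ∈ B, g i := by
  have hk : k ≤ n := by
    rw [← hB]; simpa using Finset.card_le_card (Finset.subset_univ B)
  set emb := B.orderEmbOfFin hB with hemb
  have hBim : B = Finset.univ.image emb := by
    ext j
    simp only [Finset.mem_image, Finset.mem_univ, true_and]
    constructor
    · intro hj
      have : j ∈ Set.range emb := by rw [Finset.range_orderEmbOfFin]; exact hj
      obtain ⟨i, hi⟩ := this; exact ⟨i, hi⟩
    · rintro ⟨i, rfl⟩; exact Finset.orderEmbOfFin_mem B hB i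
  rw [filter_lt_eq_image hk, hBim,
    Finset.sum_image (fun a _ b _ h => Fin.castLE_injective hk h),
    Finset.sum_image (fun a _ b _ h => emb.injective h)]
  apply Finset.sum_le_sum
  intro i _
  apply hg
  show ((Fin.castLE hk i) : ℕ) ≤ (emb i : ℕ)
  simpa using strictMono_le emb emb.strictMono i

lemma psum_le_sum (z : Fin n → ℝ) {k : ℕ} {A : Finset (Fin n)} (hA : A.card = k) :
    psum k z ≤ ∑ i ∈ A, z i := by
  classical
  set σ := Tuple.sort z
  have hsum : ∑ i ∈ A, z i = ∑ j ∈ A.image σ.symm, sortedComp z j := by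
    rw [Finset.sum_image (fun a _ b _ h => σ.symm.injective h)]
    apply Finset.sum_congr rfl
    intro i _
    simp [sortedComp, σ]
  rw [hsum]
  exact sum_mono_le (sortedComp_monotone z) _
    (by rw [Finset.card_image_of_injective _ σ.symm.injective, hA])

lemma psum_eq_sum (z : Fin n → ℝ) {k : ℕ} (hk : k ≤ n) :
    ∃ A : Finset (Fin n), A.card = k ∧ psum k z = ∑ i ∈ A, z i := by
  classical
  set σ := Tuple.sort z
  refine ⟨(Finset.univ.filter (fun i : Fin n => (i : ℕ) < k)).image σ, ?_, ?_⟩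
  · rw [Finset.card_image_of_injective _ σ.injective, filter_lt_eq_image hk,
      Finset.card_image_of_injective _ (Fin.castLE_injective hk), Finset.card_univ,
      Fintype.card_fin]
  · rw [Finset.sum_image (fun a _ b _ h => σ.injective h)]
    rfl

lemma subsets_nonempty {k : ℕ} (hk : k ≤ n) :
    (Finset.univ.filter fun A : Finset (Fin n) => A.card = k).Nonempty := by
  obtain ⟨A, -, hA⟩ := Finset.exists_subset_card_eq (s := (Finset.univ : Finset (Fin n)))
    (by simpa using hk)
  exact ⟨A, by simpa using hA⟩

lemma psum_eq_inf' {k : ℕ} (hk : k ≤ n) (z : Fin n → ℝ) :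
    psum k z = (Finset.univ.filter fun A : Finset (Fin n) => A.card = k).inf'
      (subsets_nonempty hk) (fun A => ∑ i ∈ A, z i) := by
  apply le_antisymm
  · apply Finset.le_inf'
    intro A hA
    exact psum_le_sum z (by simpa using hA)
  · obtain ⟨A, hA, hsum⟩ := psum_eq_sum z hk
    rw [hsum]
    exact Finset.inf'_le _ (by simpa using hA)

lemma psum_continuous {k : ℕ} (hk : k ≤ n) : Continuous (psum (n := n) k) := by
  have : psum (n := n) k = fun z => (Finset.univ.filter
      fun A : Finset (Fin n) => A.card = k).inf' (subsets_nonempty hk)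
      (fun A => ∑ i ∈ A, z i) := funext (psum_eq_inf' hk)
  rw [this]
  apply Continuous.finset_inf'_apply
  intro A _
  exact continuous_finset_sum _ (fun i _ => continuous_apply i)

lemma psum_midpoint {k : ℕ} (hk : k ≤ n) (x y : Fin n → ℝ) :
    (psum k x + psum k y) / 2 ≤ psum k (fun i => (x i + y i) / 2) := by
  obtain ⟨A, hA, hsum⟩ := psum_eq_sum (fun i => (x i + y i) / 2) hk
  rw [hsum]
  have hx := psum_le_sum x hA
  have hy := psum_le_sum y hA
  have : ∑ i ∈ A, (x i + y i) / 2 = ((∑ i ∈ A, x i) + ∑ i ∈ A, y i) / 2 := by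
    rw [← Finset.sum_add_distrib, Finset.sum_div]
  rw [this]
  linarith

lemma psum_succ (z : Fin n → ℝ) (i : Fin n) :
    psum ((i : ℕ) + 1) z = psum (i : ℕ) z + sortedComp z i := by
  have hfe : Finset.univ.filter (fun j : Fin n => (j : ℕ) < (i : ℕ) + 1) =
      insert i (Finset.univ.filter (fun j : Fin n => (j : ℕ) < (i : ℕ))) := by
    ext j
    simp only [Finset.mem_filter, Finset.mem_univ, true_and, Finset.mem_insert]
    constructor
    · intro hj
      rcases Nat.lt_succ_iff_lt_or_eq.mp hj with h | h
      · exact Or.inr h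
      · exact Or.inl (Fin.ext h)
    · rintro (rfl | hj)
      · exact Nat.lt_succ_self _
      · exact Nat.lt_succ_of_lt hj
  rw [psum, hfe, Finset.sum_insert (by simp), psum]
  ring

def chain (X : Set (Fin n → ℝ)) : ℕ → Set (Fin n → ℝ)
  | 0 => X
  | k+1 => {x ∈ chain X k | ∀ z ∈ chain X k, psum (k+1) z ≤ psum (k+1) x}

lemma chain_succ_subset (X : Set (Fin n → ℝ)) (k : ℕ) :
    chain X (k+1) ⊆ chain X k := fun _ hx => hx.1

lemma chain_anti (X : Set (Fin n → ℝ)) {j k : ℕ} (h : j ≤ k) :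
    chain X k ⊆ chain X j := by
  induction k with
  | zero => rw [Nat.le_zero.mp h]
  | succ k ih =>
      rcases Nat.lt_succ_iff_lt_or_eq.mp (Nat.lt_succ_of_le h) with h' | rfl
      · exact (chain_succ_subset X k).trans (ih (Nat.lt_succ_iff.mp h'))
      · exact fun _ hx => hx

lemma chain_subset (X : Set (Fin n → ℝ)) (k : ℕ) : chain X k ⊆ X :=
  chain_anti X (Nat.zero_le k)

lemma chain_compact_nonempty (X : Set (Fin n → ℝ)) (hX : IsCompact X)
    (hne : X.Nonempty) : ∀ k, k ≤ n → IsCompact (chain X k) ∧ (chain X k).Nonempty := by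
  intro k
  induction k with
  | zero => exact fun _ => ⟨hX, hne⟩
  | succ k ih =>
      intro hk1
      obtain ⟨hc, hne'⟩ := ih (Nat.le_of_succ_le hk1)
      have hcont := psum_continuous (n := n) (k := k + 1) hk1
      obtain ⟨x, hxC, hmax⟩ := hc.exists_isMaxOn hne' hcont.continuousOn
      have hclosed : IsClosed {w : Fin n → ℝ | ∀ z ∈ chain X k,
          psum (k+1) z ≤ psum (k+1) w} := by
        have : {w : Fin n → ℝ | ∀ z ∈ chain X k, psum (k+1) z ≤ psum (k+1) w} =
            ⋂ z ∈ chain X k, {w | psum (k+1) z ≤ psum (k+1) w} := by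
          ext w; simp [Set.mem_iInter]
        rw [this]
        exact isClosed_biInter fun z _ => isClosed_le continuous_const hcont
      constructor
      · exact hc.inter_right hclosed
      · exact ⟨x, hxC, fun z hz => hmax hz⟩

lemma chain_psum_eq (X : Set (Fin n → ℝ)) {k : ℕ} {x y : Fin n → ℝ}
    (hx : x ∈ chain X (k+1)) (hy : y ∈ chain X (k+1)) :
    psum (k+1) x = psum (k+1) y :=
  le_antisymm (hy.2 x hx.1) (hx.2 y hy.1)

lemma sq_sum_sorted (z : Fin n → ℝ) :
    ∑ i, (sortedComp z i) ^ 2 = ∑ i, (z i) ^ 2 :=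
  Equiv.sum_comp (Tuple.sort z) (fun j => (z j) ^ 2)

end LexAux

theorem lexmax_unique {n : ℕ} (X : Set (Fin n → ℝ)) (hne : X.Nonempty)
    (hX : IsCompact X) (hconv : Convex ℝ X) : ∃! y, IsLexMax X y := by
  classical
  open LexAux in
  obtain ⟨hcomp_n, hne_n⟩ := LexAux.chain_compact_nonempty X hX hne n le_rfl
  obtain ⟨y, hy⟩ := hne_n
  -- partial sums are equal on chain X n
  have hpsum_eq : ∀ x ∈ LexAux.chain X n, ∀ k : ℕ, k ≤ n →
      LexAux.psum k x = LexAux.psum k y := by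
    intro x hx k hk
    cases k with
    | zero => rw [LexAux.psum_zero, LexAux.psum_zero]
    | succ j =>
        exact LexAux.chain_psum_eq X (LexAux.chain_anti X hk hx)
          (LexAux.chain_anti X hk hy)
  have hsorted_eq : ∀ x ∈ LexAux.chain X n, ∀ i : Fin n,
      sortedComp x i = sortedComp y i := by
    intro x hx i
    have h1 := LexAux.psum_succ x i
    have h2 := LexAux.psum_succ y i
    have e1 := hpsum_eq x hx i (le_of_lt i.2)
    have e2 := hpsum_eq x hx ((i : ℕ) + 1) i.2
    linarith
  -- midpoints stay in the chain
  have hmid : ∀ x ∈ LexAux.chain X n, ∀ y' ∈ LexAux.chain X n,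
      (fun i => (x i + y' i) / 2) ∈ LexAux.chain X n := by
    intro x hx y' hy'
    have hmX : (fun i => (x i + y' i) / 2) ∈ X := by
      have h := hconv (LexAux.chain_subset X n hx) (LexAux.chain_subset X n hy')
        (le_of_lt one_half_pos) (le_of_lt one_half_pos) (by norm_num)
      convert h using 1
      funext i
      simp [Pi.smul_apply, smul_eq_mul]
      ring
    have key : ∀ k, k ≤ n → (fun i => (x i + y' i) / 2) ∈ LexAux.chain X k := by
      intro k
      induction k with
      | zero => exact fun _ => hmX
      | succ k ih =>
          intro hk1
          refine ⟨ih (Nat.le_of_succ_le hk1), ?_⟩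
          intro z hz
          have hxk : x ∈ LexAux.chain X (k+1) := LexAux.chain_anti X hk1 hx
          have hyk : y' ∈ LexAux.chain X (k+1) := LexAux.chain_anti X hk1 hy'
          have h1 : LexAux.psum (k+1) z ≤ LexAux.psum (k+1) x := hxk.2 z hz
          have h2 : LexAux.psum (k+1) x = LexAux.psum (k+1) y' :=
            LexAux.chain_psum_eq X hxk hyk
          have h3 := LexAux.psum_midpoint hk1 x y'
          linarith
    exact key n le_rfl
  -- chain X n is a singleton
  have hsingle : ∀ x ∈ LexAux.chain X n, x = y := by
    intro x hx
    by_contra hxy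
    have hmchain : (fun i => (x i + y i) / 2) ∈ LexAux.chain X n := hmid x hx y hy
    have hq : ∀ z ∈ LexAux.chain X n, ∑ i, (z i) ^ 2 = ∑ i, (y i) ^ 2 := by
      intro z hz
      rw [← LexAux.sq_sum_sorted z, ← LexAux.sq_sum_sorted y]
      exact Finset.sum_congr rfl fun i _ => by rw [hsorted_eq z hz i]
    have hx2 := hq x hx
    have hm2 := hq _ hmchain
    have hstrict : ∑ i, ((x i + y i) / 2) ^ 2 <
        ((∑ i, (x i) ^ 2) + ∑ i, (y i) ^ 2) / 2 := by
      obtain ⟨i0, hi0⟩ : ∃ i, x i ≠ y i := by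
        by_contra h; push_neg at h; exact hxy (funext h)
      have hrw : ((∑ i, (x i) ^ 2) + ∑ i, (y i) ^ 2) / 2 =
          ∑ i, ((x i) ^ 2 + (y i) ^ 2) / 2 := by
        rw [← Finset.sum_add_distrib, Finset.sum_div]
      rw [hrw]
      apply Finset.sum_lt_sum
      · intro i _; nlinarith [sq_nonneg (x i - y i)]
      · refine ⟨i0, Finset.mem_univ i0, ?_⟩
        have h0 : x i0 - y i0 ≠ 0 := sub_ne_zero.mpr hi0
        have hp : 0 < (x i0 - y i0) ^ 2 := by positivity
        nlinarith
    linarith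
  -- y is a lexicographic maximum
  have hylex : IsLexMax X y := by
    refine ⟨LexAux.chain_subset X n hy, ?_⟩
    intro x hxX
    by_cases hxn : x ∈ LexAux.chain X n
    · exact Or.inl (hsingle x hxn)
    · right
      have hP : ∃ k, x ∉ LexAux.chain X k := ⟨n, hxn⟩
      have hk0 : Nat.find hP ≠ 0 := by
        intro h
        have := Nat.find_spec hP
        rw [h] at this
        exact this hxX
      set j := Nat.find hP - 1 with hjdef
      have hkeq : Nat.find hP = j + 1 := by omega
      have hkspec : x ∉ LexAux.chain X (j + 1) := by
        rw [← hkeq]; exact Nat.find_spec hP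
      have hkle : j + 1 ≤ n := by
        rw [← hkeq]; exact Nat.find_le hxn
      have hxmem : ∀ m, m ≤ j → x ∈ LexAux.chain X m := by
        intro m hm
        by_contra h
        have : Nat.find hP ≤ m := Nat.find_le h
        omega
      have hpeq : ∀ l, l ≤ j → LexAux.psum l x = LexAux.psum l y := by
        intro l hl
        cases l with
        | zero => rw [LexAux.psum_zero, LexAux.psum_zero]
        | succ i =>
            exact LexAux.chain_psum_eq X (hxmem (i+1) hl)
              (LexAux.chain_anti X (le_trans hl (Nat.le_of_succ_le hkle)) hy)
      have hlt : LexAux.psum (j+1) x < LexAux.psum (j+1) y := by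
        have hy1 : y ∈ LexAux.chain X (j+1) := LexAux.chain_anti X hkle hy
        have hnot : ¬ (x ∈ LexAux.chain X j ∧ ∀ z ∈ LexAux.chain X j,
            LexAux.psum (j+1) z ≤ LexAux.psum (j+1) x) := hkspec
        push_neg at hnot
        obtain ⟨z, hz, hzx⟩ := hnot (hxmem j le_rfl)
        exact lt_of_lt_of_le hzx (hy1.2 z hz)
      have hjn : j < n := Nat.lt_of_succ_le hkle
      refine ⟨⟨j, hjn⟩, ?_, ?_⟩
      · intro l hl
        have hlj : (l : ℕ) < j := hl
        have h1 := LexAux.psum_succ x l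
        have h2 := LexAux.psum_succ y l
        have e1 := hpeq (l : ℕ) (le_of_lt hlj)
        have e2 := hpeq ((l : ℕ) + 1) (Nat.succ_le_of_lt hlj)
        linarith
      · have h1 := LexAux.psum_succ x ⟨j, hjn⟩
        have h2 := LexAux.psum_succ y ⟨j, hjn⟩
        have e1 := hpeq j le_rfl
        simp only [Fin.val_mk] at h1 h2
        linarith
  refine ⟨y, hylex, ?_⟩
  intro y' hy'
  rcases hy'.2 y hylex.1 with h | ⟨i, hji, hlt⟩
  · exact h.symm
  rcases hylex.2 y' hy'.1 with h | ⟨i', hji', hlt'⟩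
  · exact h
  rcases lt_trichotomy i i' with hii | rfl | hii
  · have := hji' i hii
    linarith
  · linarith
  · have := hji i' hii
    linarith
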